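/- arXiv:1804.04891 — 2 statements merged into one kernel-verified Lean document; each statement's English description precedes it below -/
import Mathlib

section
/- Let n ≥ 1 and a = (a_1,…,a_{n-1}) ∈ {0,1}^{n-1}. For t_1,…,t_n ∈ {0,1} define b_k = t_k XOR a_k·(t_{k+1} XOR ⋯ XOR t_n) for 1 ≤ k ≤ n-1 and b_n = t_n. Then the sum over all (t_1,…,t_n) ∈ {0,1}^n of ∑_{k=1}^{n} t_k·b_k / (2^{n+1-k}·2^k) equals (n + h + 1)/8, where h = #{i ∈ {1,…,n-1} : a_i = 0}. -/
open Finset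

/-- `b_k = t_k ⊕ a_k·(t_{k+1} ⊕ ⋯ ⊕ t_n)` (0-based indices; for the last index
the sum over larger indices is empty, so `b_n = t_n`). -/
def bvec (n : ℕ) (a : Fin (n-1) → ZMod 2) (t : Fin n → ZMod 2) (k : Fin n) : ZMod 2 :=
  t k + (if h : (k : ℕ) < n - 1 then a ⟨k, h⟩ else 0) *
    ∑ i ∈ Finset.univ.filter (fun i : Fin n => k < i), t i

lemma val_sq' (x : ZMod 2) : x.val * x.val = x.val := by revert x; decide
lemma val_pair' (x y : ZMod 2) :
    x.val * (x+y).val + x.val * (x+(1+y)).val = x.val := by revert x y; decide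
lemma val_one_add' (x : ZMod 2) : (1 + x).val + x.val = 1 := by revert x; decide
lemma val_sq (x : ZMod 2) : ((x.val : ℚ)) * (x.val : ℚ) = (x.val : ℚ) := by
  exact_mod_cast congrArg (Nat.cast : ℕ → ℚ) (val_sq' x)
lemma val_pair (x y : ZMod 2) :
    (x.val:ℚ) * ((x+y).val:ℚ) + (x.val:ℚ) * ((x+(1+y)).val:ℚ) = (x.val:ℚ) := by
  exact_mod_cast congrArg (Nat.cast : ℕ → ℚ) (val_pair' x y)
lemma val_one_add (x : ZMod 2) : ((1 + x).val : ℚ) + (x.val : ℚ) = 1 := by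
  exact_mod_cast congrArg (Nat.cast : ℕ → ℚ) (val_one_add' x)
lemma zmod2_cases (x : ZMod 2) : x = 0 ∨ x = 1 := by revert x; decide

lemma sum_val (N : ℕ) (k : Fin N) :
    ∑ t : Fin N → ZMod 2, ((t k).val : ℚ) = 2 ^ N / 2 := by
  have h := Equiv.sum_comp (Equiv.addLeft (Pi.single k (1 : ZMod 2)))
      (fun t : Fin N → ZMod 2 => ((t k).val : ℚ))
  simp only [Equiv.coe_addLeft, Pi.add_apply, Pi.single_eq_same] at h
  have h3 : (∑ t : Fin N → ZMod 2, ((1 + t k).val : ℚ))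
      + ∑ t : Fin N → ZMod 2, ((t k).val : ℚ) = 2 ^ N := by
    rw [← Finset.sum_add_distrib]
    rw [Finset.sum_congr rfl (fun t _ => val_one_add (t k))]
    simp [Finset.card_univ]
  rw [h] at h3
  linarith

lemma sum_val_mul (N : ℕ) (k j : Fin N) (hkj : k < j) :
    ∑ t : Fin N → ZMod 2,
      ((t k).val : ℚ) *
        (((t k + ∑ i ∈ Finset.univ.filter (fun i : Fin N => k < i), t i)).val : ℚ)
      = 2 ^ N / 4 := by
  set S : (Fin N → ZMod 2) → ZMod 2 :=
    fun t => ∑ i ∈ Finset.univ.filter (fun i : Fin N => k < i), t i with hS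
  have h := Equiv.sum_comp (Equiv.addLeft (Pi.single j (1 : ZMod 2)))
      (fun t : Fin N → ZMod 2 => ((t k).val : ℚ) * ((t k + S t).val : ℚ))
  have hk : (Pi.single j (1:ZMod 2) : Fin N → ZMod 2) k = 0 := by
    rw [Pi.single_eq_of_ne (ne_of_lt hkj)]
  have hSflip : ∀ t : Fin N → ZMod 2, S (Pi.single j (1:ZMod 2) + t) = 1 + S t := by
    intro t
    simp only [hS, Pi.add_apply, Finset.sum_add_distrib]
    congr 1
    rw [Finset.sum_pi_single']
    simp [hkj]
  simp only [Equiv.coe_addLeft, hSflip, Pi.add_apply, hk, zero_add] at h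
  have h3 : (∑ t : Fin N → ZMod 2, ((t k).val : ℚ) * ((t k + S t).val : ℚ))
      + ∑ t : Fin N → ZMod 2, ((t k).val : ℚ) * ((t k + (1 + S t)).val : ℚ)
      = 2 ^ N / 2 := by
    rw [← Finset.sum_add_distrib]
    rw [Finset.sum_congr rfl (fun t _ => val_pair (t k) (S t))]
    exact sum_val N k
  rw [h] at h3
  linarith

theorem stmt0 (n : ℕ) (hn : 1 ≤ n) (a : Fin (n-1) → ZMod 2) :
    ∑ t : Fin n → ZMod 2, ∑ k : Fin n,
        (((t k).val : ℚ) * ((bvec n a t k).val : ℚ)) / (2 ^ (n - (k : ℕ)) * 2 ^ ((k : ℕ) + 1))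
      = ((n : ℚ) + ((Finset.univ.filter (fun i : Fin (n-1) => a i = 0)).card : ℚ) + 1) / 8 := by
  obtain ⟨m, rfl⟩ : ∃ m, n = m + 1 := ⟨n - 1, by omega⟩
  clear hn
  rw [Finset.sum_comm]
  have hden : ∀ k : Fin (m+1), ((2:ℚ) ^ (m + 1 - (k:ℕ)) * 2 ^ ((k:ℕ)+1)) = 2 ^ (m+2) := by
    intro k
    rw [← pow_add]
    congr 1
    omega
  have hinner : ∀ k : Fin (m+1),
      (∑ t : Fin (m+1) → ZMod 2, (((t k).val : ℚ) * ((bvec (m+1) a t k).val : ℚ)) /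
         (2 ^ (m + 1 - (k:ℕ)) * 2 ^ ((k:ℕ) + 1)))
      = (if h : (k:ℕ) < m then (if a ⟨k, h⟩ = 0 then (2:ℚ)^(m+1)/2 else 2^(m+1)/4)
         else 2^(m+1)/2) / 2 ^ (m+2) := by
    intro k
    rw [← Finset.sum_div, hden k]
    congr 1
    by_cases hk : (k:ℕ) < m
    · rw [dif_pos hk]
      rcases zmod2_cases (a ⟨k, hk⟩) with h0 | h1
      · rw [if_pos h0]
        simp only [bvec, Nat.add_sub_cancel, dif_pos hk, h0, zero_mul, add_zero]
        rw [Finset.sum_congr rfl (fun t _ => val_sq (t k))]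
        exact sum_val (m+1) k
      · rw [if_neg (by simp [h1])]
        simp only [bvec, Nat.add_sub_cancel, dif_pos hk, h1, one_mul]
        exact sum_val_mul (m+1) k ⟨(k:ℕ)+1, by omega⟩ (by simp [Fin.lt_def])
    · rw [dif_neg hk]
      simp only [bvec, Nat.add_sub_cancel, dif_neg hk, zero_mul, add_zero]
      rw [Finset.sum_congr rfl (fun t _ => val_sq (t k))]
      exact sum_val (m+1) k
  rw [Finset.sum_congr rfl (fun k _ => hinner k)]
  show _ = (((m + 1 : ℕ) : ℚ) + ((Finset.univ.filter (fun i : Fin m => a i = 0)).card : ℚ) + 1) / 8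
  rw [Fin.sum_univ_castSucc]
  have hX : (2:ℚ)^(m+1) ≠ 0 := by positivity
  have e1 : (2:ℚ)^(m+1)/2/2^(m+2) = 1/4 := by
    rw [pow_succ 2 (m+1)]
    field_simp
    ring
  have e2 : (2:ℚ)^(m+1)/4/2^(m+2) = 1/8 := by
    rw [pow_succ 2 (m+1)]
    field_simp
    ring
  have hlast : (if h : ((Fin.last m : Fin (m+1)):ℕ) < m then
      (if a ⟨(Fin.last m : Fin (m+1)), h⟩ = 0 then (2:ℚ)^(m+1)/2 else 2^(m+1)/4)
      else 2^(m+1)/2) / 2 ^ (m+2) = 1/4 := by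
    rw [dif_neg (by simp)]
    exact e1
  rw [hlast]
  have hcs : ∀ k : Fin m, (if h : ((k.castSucc : Fin (m+1)):ℕ) < m then
      (if a ⟨(k.castSucc : Fin (m+1)), h⟩ = 0 then (2:ℚ)^(m+1)/2 else 2^(m+1)/4)
      else 2^(m+1)/2) / 2 ^ (m+2)
      = if a k = 0 then (1/4 : ℚ) else 1/8 := by
    intro k
    rw [dif_pos (by simp [k.isLt])]
    have : (⟨((k.castSucc : Fin (m+1)):ℕ), by simp [k.isLt]⟩ : Fin m) = k := by
      apply Fin.ext
      simp
    rw [show (⟨((k.castSucc : Fin (m+1)):ℕ), _⟩ : Fin ((m+1)-1)) = k from this]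
    split
    · exact e1
    · exact e2
  rw [Finset.sum_congr rfl (fun k _ => hcs k)]
  rw [Finset.sum_ite, Finset.sum_const, Finset.sum_const]
  have hle : (Finset.univ.filter (fun i : Fin m => a i = 0)).card ≤ m := by
    simpa using Finset.card_filter_le Finset.univ (fun i : Fin m => a i = 0)
  have hneg : (Finset.univ.filter (fun i : Fin m => ¬ a i = 0)).card
      = m - (Finset.univ.filter (fun i : Fin m => a i = 0)).card := by
    have := Finset.card_filter_add_card_filter_not (s := (Finset.univ : Finset (Fin m)))
      (p := fun i : Fin m => a i = 0)
    simp only [Finset.card_univ, Fintype.card_fin] at this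
    omega
  rw [hneg]
  simp only [nsmul_eq_mul]
  rw [Nat.cast_sub hle]
  push_cast
  ring
end

section
/- Let n ≥ 1 and a = (a_1,…,a_{n-1}) ∈ {0,1}^{n-1}. For t_1,…,t_n ∈ {0,1} define b_k = t_k XOR a_k·(t_{k+1} XOR ⋯ XOR t_n) for 1 ≤ k ≤ n-1 and b_n = t_n. Then for any pair of indices k_1 ≠ k_2 in {1,…,n}, the sum over all (t_1,…,t_n) ∈ {0,1}^n of t_{k_1}·b_{k_2} equals 2^{n-2}. -/
open Finset

lemma sum_eval_one {α : Type*} [Fintype α] [DecidableEq α] (i : α) :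
    ∑ t : α → ZMod 2, (t i).val = 2 ^ (Fintype.card α - 1) := by
  rw [← Equiv.sum_comp (Equiv.funSplitAt i (ZMod 2)).symm]
  rw [Fintype.sum_prod_type]
  have : ∀ (p : ZMod 2 × ({ j // j ≠ i } → ZMod 2)),
      (((Equiv.funSplitAt i (ZMod 2)).symm p) i).val = p.1.val := by
    intro p; simp [Equiv.funSplitAt, Equiv.piSplitAt]
  simp only [this]
  rw [Finset.sum_comm]
  simp only [Finset.sum_const, smul_eq_mul]
  have hcard : Fintype.card ({ j // j ≠ i } → ZMod 2) = 2 ^ (Fintype.card α - 1) := by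
    rw [Fintype.card_fun, Fintype.card_subtype_compl, ZMod.card]
    simp
  rw [Finset.card_univ, hcard]
  have : ∑ x : ZMod 2, x.val = 1 := by decide
  rw [this, mul_one]

lemma sum_eval_two {α : Type*} [Fintype α] [DecidableEq α] (i j : α) (hij : i ≠ j) :
    ∑ t : α → ZMod 2, (t i).val * (t j).val = 2 ^ (Fintype.card α - 2) := by
  rw [← Equiv.sum_comp (Equiv.funSplitAt i (ZMod 2)).symm]
  rw [Fintype.sum_prod_type]
  have h1 : ∀ (p : ZMod 2 × ({ k // k ≠ i } → ZMod 2)),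
      (((Equiv.funSplitAt i (ZMod 2)).symm p) i).val = p.1.val := by
    intro p; simp [Equiv.funSplitAt, Equiv.piSplitAt]
  have h2 : ∀ (p : ZMod 2 × ({ k // k ≠ i } → ZMod 2)),
      (((Equiv.funSplitAt i (ZMod 2)).symm p) j).val = (p.2 ⟨j, hij.symm⟩).val := by
    intro p; simp [Equiv.funSplitAt, Equiv.piSplitAt, hij.symm]
  simp only [h1, h2]
  have : ∀ x : ZMod 2, ∑ u : { k // k ≠ i } → ZMod 2, x.val * (u ⟨j, hij.symm⟩).val
      = x.val * 2 ^ (Fintype.card { k // k ≠ i } - 1) := by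
    intro x
    rw [← Finset.mul_sum, sum_eval_one]
  simp only [this]
  rw [← Finset.sum_mul]
  have : ∑ x : ZMod 2, x.val = 1 := by decide
  rw [this, one_mul]
  congr 1
  rw [Fintype.card_subtype_compl]
  simp [Nat.sub_sub]

theorem stmt1 (n : ℕ) (hn : 2 ≤ n) (a : Fin (n-1) → ZMod 2)
    (k₁ k₂ : Fin n) (hk : k₁ ≠ k₂) :
    ∑ t : Fin n → ZMod 2, (t k₁).val * (bvec n a t k₂).val = 2 ^ (n - 2) := by
  set φ : (Fin n → ZMod 2) → (Fin n → ZMod 2) :=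
    fun t => Function.update t k₂ (bvec n a t k₂) with hφ
  have hbv : ∀ t, bvec n a (φ t) k₂ = t k₂ := by
    intro t
    have hsum : ∑ i ∈ Finset.univ.filter (fun i : Fin n => k₂ < i), (φ t) i
        = ∑ i ∈ Finset.univ.filter (fun i : Fin n => k₂ < i), t i := by
      apply Finset.sum_congr rfl
      intro i hi
      simp only [Finset.mem_filter] at hi
      have : i ≠ k₂ := fun h => absurd (h ▸ hi.2) (lt_irrefl k₂)
      simp [hφ, Function.update_of_ne this]
    have hk₂ : (φ t) k₂ = bvec n a t k₂ := by simp [hφ]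
    simp only [bvec, hk₂, hsum]
    have h22 : ∀ (x y : ZMod 2), x + y + y = x := by decide
    exact h22 _ _
  have hinv : Function.Involutive φ := by
    intro t
    funext i
    by_cases h : i = k₂
    · subst h
      simp [hφ, hbv t]
      exact hbv t
    · simp [hφ, Function.update_of_ne h]
  have hbij := hinv.bijective
  have := Fintype.sum_bijective φ hbij
    (fun t => (t k₁).val * (bvec n a t k₂).val)
    (fun t => (t k₁).val * (t k₂).val)
    (by
      intro t
      congr 1
      · congr 1
        exact (Function.update_of_ne hk _ _).symm
      · congr 1
        simp [hφ])
  rw [this, sum_eval_two k₁ k₂ hk]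
  congr 1
  simp
end
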